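/- Let U ⊆ ℝ² be open and w : U → ℝ a smooth solution of the reduced equation with ∂₂²w ≠ 0 and ∂₁∂₂²w ≠ 0 on U. Define θ⁰ := z₂ − z₁·∂₂²w and recursively θ^{k+1} := (∂₂²w/∂₁∂₂²w)·∂₂θ^k for k ≥ 0, and assume θ² ≠ 0 on U. Fix m ∈ ℕ and a smooth function ϱ̂ : ℝ^{m+2} → ℝ of arguments (v, t₀, …, t_m). Then the function f := (∂₂²w/(∂₁∂₂²w·θ²))·((∂ϱ̂/∂v)(∂₂²w, θ⁰, …, θ^m) − Σ_{k=0}^{m} θ^{k+1}·(∂ϱ̂/∂t_k)(∂₂²w, θ⁰, …, θ^m)) + ϱ̂(∂₂²w, θ⁰, …, θ^m) satisfies the generalized-symmetry condition ∂₂(∂₁(∂₂f) + (∂₂²w)·∂₂(∂₂f)) = 0 on U. -/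

import Mathlib

/-- First-coordinate partial derivative of a function on `ℝ²`. -/
noncomputable def d1 (f : ℝ × ℝ → ℝ) (p : ℝ × ℝ) : ℝ := deriv (fun s => f (s, p.2)) p.1

/-- Second-coordinate partial derivative of a function on `ℝ²`. -/
noncomputable def d2 (f : ℝ × ℝ → ℝ) (p : ℝ × ℝ) : ℝ := deriv (fun s => f (p.1, s)) p.2

/-- `w` is a smooth solution of the reduced equation `∂₁∂₂²w + (∂₂²w)·(∂₂³w) = 0` on `U`. -/
def IsRedSolOn (w : ℝ × ℝ → ℝ) (U : Set (ℝ × ℝ)) : Prop :=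
  ContDiffOn ℝ (⊤ : ℕ∞) w U ∧
    ∀ p ∈ U, d1 (d2 (d2 w)) p + d2 (d2 w) p * d2 (d2 (d2 w)) p = 0

/-- `h` is a smooth solution of the inviscid Burgers equation `∂₁h + h·∂₂h = 0` on `U`. -/
def IsBurgersSolOn (h : ℝ × ℝ → ℝ) (U : Set (ℝ × ℝ)) : Prop :=
  ContDiffOn ℝ (⊤ : ℕ∞) h U ∧ ∀ p ∈ U, d1 h p + h p * d2 h p = 0

/-- The lowest-order `z₂`-integral `ζ = ∂₁∂₂w + ½(∂₂²w)²` of the reduced equation. -/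
noncomputable def zetaInt (w : ℝ × ℝ → ℝ) (p : ℝ × ℝ) : ℝ :=
  d1 (d2 w) p + (1 / 2) * (d2 (d2 w) p) ^ 2

/-- `θ⁰ = z₂ − z₁·∂₂²w`. -/
noncomputable def theta0 (w : ℝ × ℝ → ℝ) (p : ℝ × ℝ) : ℝ := p.2 - p.1 * d2 (d2 w) p

/-- `θ¹ = ∂₂²w/∂₁∂₂²w + z₁`. -/
noncomputable def theta1 (w : ℝ × ℝ → ℝ) (p : ℝ × ℝ) : ℝ :=
  d2 (d2 w) p / d1 (d2 (d2 w)) p + p.1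

/-- `θ² = (∂₂²w/∂₁∂₂²w)·∂₂θ¹`. -/
noncomputable def theta2 (w : ℝ × ℝ → ℝ) (p : ℝ × ℝ) : ℝ :=
  d2 (d2 w) p / d1 (d2 (d2 w)) p * d2 (theta1 w) p

/-- `f` satisfies the generalized-symmetry condition
`∂₂(∂₁(∂₂f) + (∂₂²w)·∂₂(∂₂f)) = 0` of the reduced equation along the solution `w` on `U`. -/
def IsGenSymCharOn (w f : ℝ × ℝ → ℝ) (U : Set (ℝ × ℝ)) : Prop :=
  ∀ p ∈ U, d2 (fun q => d1 (d2 f) q + d2 (d2 w) q * d2 (d2 f) q) p = 0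

/-- The sequence `θ⁰ = z₂ − z₁·∂₂²w`, `θ^{k+1} = (∂₂²w/∂₁∂₂²w)·∂₂θ^k`. -/
noncomputable def thetaSeq (w : ℝ × ℝ → ℝ) : ℕ → ℝ × ℝ → ℝ
  | 0 => fun p => p.2 - p.1 * d2 (d2 w) p
  | k + 1 => fun p => d2 (d2 w) p / d1 (d2 (d2 w)) p * d2 (thetaSeq w k) p

/-- The argument vector `(∂₂²w, θ⁰, …, θ^m)` at a point `p`. -/
noncomputable def argvec (w : ℝ × ℝ → ℝ) (m : ℕ) (p : ℝ × ℝ) : Fin (m + 2) → ℝ :=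
  Fin.cons (d2 (d2 w) p) fun j : Fin (m + 1) => thetaSeq w j p

/-- Partial derivative of a function of `m + 2` real arguments in its `i`-th argument. -/
noncomputable def pdArg {m : ℕ} (g : (Fin (m + 2) → ℝ) → ℝ) (i : Fin (m + 2))
    (a : Fin (m + 2) → ℝ) : ℝ := deriv (fun t => g (Function.update a i t)) (a i)

section Infra
variable {F G : ℝ × ℝ → ℝ} {U : Set (ℝ × ℝ)} {p : ℝ × ℝ}

lemma slice1_hasDerivAt (p : ℝ × ℝ) : HasDerivAt (fun s : ℝ => (s, p.2)) ((1:ℝ), (0:ℝ)) p.1 :=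
  HasDerivAt.prodMk (hasDerivAt_id _) (hasDerivAt_const _ _)

lemma slice2_hasDerivAt (p : ℝ × ℝ) : HasDerivAt (fun s : ℝ => (p.1, s)) ((0:ℝ), (1:ℝ)) p.2 :=
  HasDerivAt.prodMk (hasDerivAt_const _ _) (hasDerivAt_id _)

lemma hasFDerivAt_of_contDiffOn (hU : IsOpen U) (hF : ContDiffOn ℝ (⊤:ℕ∞) F U) (hp : p ∈ U) :
    HasFDerivAt F (fderiv ℝ F p) p :=
  (((hF.contDiffAt (hU.mem_nhds hp)).differentiableAt (by simp))).hasFDerivAt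

lemma hasD1 (hU : IsOpen U) (hF : ContDiffOn ℝ (⊤:ℕ∞) F U) (hp : p ∈ U) :
    HasDerivAt (fun s => F (s, p.2)) (fderiv ℝ F p (1, 0)) p.1 :=
  (hasFDerivAt_of_contDiffOn hU hF hp).comp_hasDerivAt _ (slice1_hasDerivAt p)

lemma hasD2 (hU : IsOpen U) (hF : ContDiffOn ℝ (⊤:ℕ∞) F U) (hp : p ∈ U) :
    HasDerivAt (fun s => F (p.1, s)) (fderiv ℝ F p (0, 1)) p.2 :=
  (hasFDerivAt_of_contDiffOn hU hF hp).comp_hasDerivAt _ (slice2_hasDerivAt p)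

lemma d1_eq_fderiv (hU : IsOpen U) (hF : ContDiffOn ℝ (⊤:ℕ∞) F U) (hp : p ∈ U) :
    d1 F p = fderiv ℝ F p (1, 0) := (hasD1 hU hF hp).deriv

lemma d2_eq_fderiv (hU : IsOpen U) (hF : ContDiffOn ℝ (⊤:ℕ∞) F U) (hp : p ∈ U) :
    d2 F p = fderiv ℝ F p (0, 1) := (hasD2 hU hF hp).deriv

lemma hasD1' (hU : IsOpen U) (hF : ContDiffOn ℝ (⊤:ℕ∞) F U) (hp : p ∈ U) :
    HasDerivAt (fun s => F (s, p.2)) (d1 F p) p.1 := by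
  rw [d1_eq_fderiv hU hF hp]; exact hasD1 hU hF hp

lemma hasD2' (hU : IsOpen U) (hF : ContDiffOn ℝ (⊤:ℕ∞) F U) (hp : p ∈ U) :
    HasDerivAt (fun s => F (p.1, s)) (d2 F p) p.2 := by
  rw [d2_eq_fderiv hU hF hp]; exact hasD2 hU hF hp

lemma contDiffOn_d1 (hU : IsOpen U) (hF : ContDiffOn ℝ (⊤:ℕ∞) F U) :
    ContDiffOn ℝ (⊤:ℕ∞) (d1 F) U := by
  have h1 : ContDiffOn ℝ (⊤:ℕ∞) (fun p => fderiv ℝ F p ((1:ℝ), (0:ℝ))) U :=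
    (hF.fderiv_of_isOpen hU (by exact_mod_cast le_top)).clm_apply contDiffOn_const
  exact h1.congr fun q hq => d1_eq_fderiv hU hF hq

lemma contDiffOn_d2 (hU : IsOpen U) (hF : ContDiffOn ℝ (⊤:ℕ∞) F U) :
    ContDiffOn ℝ (⊤:ℕ∞) (d2 F) U := by
  have h1 : ContDiffOn ℝ (⊤:ℕ∞) (fun p => fderiv ℝ F p ((0:ℝ), (1:ℝ))) U :=
    (hF.fderiv_of_isOpen hU (by exact_mod_cast le_top)).clm_apply contDiffOn_const
  exact h1.congr fun q hq => d2_eq_fderiv hU hF hq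

lemma mem_slice1 (hU : IsOpen U) (hp : p ∈ U) : ∀ᶠ s in nhds p.1, (s, p.2) ∈ U :=
  (hU.preimage (continuous_id.prodMk continuous_const)).mem_nhds hp

lemma mem_slice2 (hU : IsOpen U) (hp : p ∈ U) : ∀ᶠ s in nhds p.2, (p.1, s) ∈ U :=
  (hU.preimage (continuous_const.prodMk continuous_id)).mem_nhds hp

lemma d1_congr (hU : IsOpen U) (hFG : ∀ q ∈ U, F q = G q) (hp : p ∈ U) : d1 F p = d1 G p := by
  apply Filter.EventuallyEq.deriv_eq
  filter_upwards [mem_slice1 hU hp] with s hs using hFG _ hs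

lemma d2_congr (hU : IsOpen U) (hFG : ∀ q ∈ U, F q = G q) (hp : p ∈ U) : d2 F p = d2 G p := by
  apply Filter.EventuallyEq.deriv_eq
  filter_upwards [mem_slice2 hU hp] with s hs using hFG _ hs

lemma d2_zero_of_eq_zero (hU : IsOpen U) (hF : ∀ q ∈ U, F q = 0) (hp : p ∈ U) : d2 F p = 0 := by
  rw [d2_congr hU hF hp]; simp [d2]
end Infra

section Symm
variable {F : ℝ × ℝ → ℝ} {U : Set (ℝ × ℝ)} {p : ℝ × ℝ}

lemma d1_clm_apply (hU : IsOpen U) {Φ : ℝ × ℝ → (ℝ × ℝ) →L[ℝ] ℝ}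
    (hΦ : ContDiffOn ℝ (⊤:ℕ∞) Φ U) (hp : p ∈ U) (v : ℝ × ℝ) :
    d1 (fun q => Φ q v) p = fderiv ℝ Φ p (1, 0) v := by
  have hΦp : HasFDerivAt Φ (fderiv ℝ Φ p) p :=
    ((hΦ.contDiffAt (hU.mem_nhds hp)).differentiableAt (by simp)).hasFDerivAt
  have h1 : HasDerivAt (fun s => Φ (s, p.2)) (fderiv ℝ Φ p (1, 0)) p.1 :=
    hΦp.comp_hasDerivAt _ (slice1_hasDerivAt p)
  have h2 := h1.clm_apply (hasDerivAt_const p.1 v)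
  simp only [map_zero, add_zero] at h2
  exact h2.deriv

lemma d2_clm_apply (hU : IsOpen U) {Φ : ℝ × ℝ → (ℝ × ℝ) →L[ℝ] ℝ}
    (hΦ : ContDiffOn ℝ (⊤:ℕ∞) Φ U) (hp : p ∈ U) (v : ℝ × ℝ) :
    d2 (fun q => Φ q v) p = fderiv ℝ Φ p (0, 1) v := by
  have hΦp : HasFDerivAt Φ (fderiv ℝ Φ p) p :=
    ((hΦ.contDiffAt (hU.mem_nhds hp)).differentiableAt (by simp)).hasFDerivAt
  have h1 : HasDerivAt (fun s => Φ (p.1, s)) (fderiv ℝ Φ p (0, 1)) p.2 :=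
    hΦp.comp_hasDerivAt _ (slice2_hasDerivAt p)
  have h2 := h1.clm_apply (hasDerivAt_const p.2 v)
  simp only [map_zero, add_zero] at h2
  exact h2.deriv

lemma d1_d2_symm (hU : IsOpen U) (hF : ContDiffOn ℝ (⊤:ℕ∞) F U) (hp : p ∈ U) :
    d1 (d2 F) p = d2 (d1 F) p := by
  have hΦs : ContDiffOn ℝ (⊤:ℕ∞) (fderiv ℝ F) U :=
    hF.fderiv_of_isOpen hU (by exact_mod_cast le_top)
  have hΦp : HasFDerivAt (fderiv ℝ F) (fderiv ℝ (fderiv ℝ F) p) p :=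
    ((hΦs.contDiffAt (hU.mem_nhds hp)).differentiableAt (by simp)).hasFDerivAt
  have hev : ∀ᶠ y in nhds p, HasFDerivAt F (fderiv ℝ F y) y := by
    filter_upwards [hU.mem_nhds hp] with y hy using hasFDerivAt_of_contDiffOn hU hF hy
  have hsym := second_derivative_symmetric_of_eventually hev hΦp ((1:ℝ), (0:ℝ)) ((0:ℝ), (1:ℝ))
  have e1 : d1 (d2 F) p = d1 (fun q => fderiv ℝ F q ((0:ℝ), (1:ℝ))) p :=
    d1_congr hU (fun q hq => d2_eq_fderiv hU hF hq) hp
  have e2 : d2 (d1 F) p = d2 (fun q => fderiv ℝ F q ((1:ℝ), (0:ℝ))) p :=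
    d2_congr hU (fun q hq => d1_eq_fderiv hU hF hq) hp
  rw [e1, e2, d1_clm_apply hU hΦs hp, d2_clm_apply hU hΦs hp]
  exact hsym
end Symm


section Chain
variable {m : ℕ} {G : (Fin (m + 2) → ℝ) → ℝ} {U : Set (ℝ × ℝ)} {p : ℝ × ℝ}

lemma single_eq_smul (v : Fin (m + 2) → ℝ) (i : Fin (m + 2)) :
    (Pi.single i (v i) : Fin (m + 2) → ℝ) = v i • (Pi.single i (1:ℝ) : Fin (m + 2) → ℝ) := by
  ext j
  by_cases h : j = i
  · subst h; simp
  · simp [Pi.single_eq_of_ne h]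

lemma pdArg_eq_fderiv (hG : ContDiff ℝ (⊤:ℕ∞) G) (i : Fin (m + 2)) (a : Fin (m + 2) → ℝ) :
    pdArg G i a = fderiv ℝ G a (Pi.single i 1) := by
  have hG' : HasFDerivAt G (fderiv ℝ G a) (Function.update a i (a i)) := by
    rw [Function.update_eq_self]
    exact ((hG.contDiffAt.differentiableAt (by simp))).hasFDerivAt
  have h := hG'.comp_hasDerivAt (a i) (hasDerivAt_update a i (a i))
  exact h.deriv

lemma contDiff_pdArg (hG : ContDiff ℝ (⊤:ℕ∞) G) (i : Fin (m + 2)) :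
    ContDiff ℝ (⊤:ℕ∞) (pdArg G i) := by
  have : pdArg G i = fun a => fderiv ℝ G a (Pi.single i 1) :=
    funext (pdArg_eq_fderiv hG i)
  rw [this]
  exact (hG.fderiv_right (by exact_mod_cast le_top)).clm_apply contDiff_const

lemma fderiv_apply_sum (hG : ContDiff ℝ (⊤:ℕ∞) G) (a v : Fin (m + 2) → ℝ) :
    fderiv ℝ G a v = ∑ i, pdArg G i a * v i := by
  have hv : v = ∑ i, Pi.single i (v i) := (Finset.univ_sum_single v).symm
  conv_lhs => rw [hv]
  rw [map_sum]
  refine Finset.sum_congr rfl fun i _ => ?_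
  rw [single_eq_smul v i, map_smul, smul_eq_mul, pdArg_eq_fderiv hG i a, mul_comm]

lemma d2_comp (hU : IsOpen U) (hG : ContDiff ℝ (⊤:ℕ∞) G) (c : Fin (m + 2) → ℝ × ℝ → ℝ)
    (hc : ∀ i, ContDiffOn ℝ (⊤:ℕ∞) (c i) U) (hp : p ∈ U) :
    d2 (fun q => G (fun i => c i q)) p
      = ∑ i, pdArg G i (fun i => c i p) * d2 (c i) p := by
  have hslice : HasDerivAt (fun s => (fun i => c i (p.1, s)))
      (fun i => d2 (c i) p) p.2 := hasDerivAt_pi.2 fun i => hasD2' hU (hc i) hp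
  have hG' : HasFDerivAt G (fderiv ℝ G (fun i => c i p)) (fun i => c i p) :=
    ((hG.contDiffAt.differentiableAt (by simp))).hasFDerivAt
  have h : HasDerivAt (fun s => G (fun i => c i (p.1, s)))
      (fderiv ℝ G (fun i => c i p) (fun i => d2 (c i) p)) p.2 :=
    hG'.comp_hasDerivAt p.2 hslice
  show deriv (fun s => G (fun i => c i (p.1, s))) p.2 = _
  rw [h.deriv, fderiv_apply_sum hG]

lemma d1_comp (hU : IsOpen U) (hG : ContDiff ℝ (⊤:ℕ∞) G) (c : Fin (m + 2) → ℝ × ℝ → ℝ)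
    (hc : ∀ i, ContDiffOn ℝ (⊤:ℕ∞) (c i) U) (hp : p ∈ U) :
    d1 (fun q => G (fun i => c i q)) p
      = ∑ i, pdArg G i (fun i => c i p) * d1 (c i) p := by
  have hslice : HasDerivAt (fun s => (fun i => c i (s, p.2)))
      (fun i => d1 (c i) p) p.1 := hasDerivAt_pi.2 fun i => hasD1' hU (hc i) hp
  have hG' : HasFDerivAt G (fderiv ℝ G (fun i => c i p)) (fun i => c i p) :=
    ((hG.contDiffAt.differentiableAt (by simp))).hasFDerivAt
  have h : HasDerivAt (fun s => G (fun i => c i (s, p.2)))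
      (fderiv ℝ G (fun i => c i p) (fun i => d1 (c i) p)) p.1 :=
    hG'.comp_hasDerivAt p.1 hslice
  show deriv (fun s => G (fun i => c i (s, p.2))) p.1 = _
  rw [h.deriv, fderiv_apply_sum hG]

lemma contDiffOn_comp (hG : ContDiff ℝ (⊤:ℕ∞) G) (c : Fin (m + 2) → ℝ × ℝ → ℝ)
    (hc : ∀ i, ContDiffOn ℝ (⊤:ℕ∞) (c i) U) :
    ContDiffOn ℝ (⊤:ℕ∞) (fun q => G (fun i => c i q)) U :=
  hG.comp_contDiffOn (contDiffOn_pi.2 hc)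
end Chain

section Arith
variable {F G : ℝ × ℝ → ℝ} {U : Set (ℝ × ℝ)} {p : ℝ × ℝ} {n : ℕ}

lemma d2_mul (hU : IsOpen U) (hF : ContDiffOn ℝ (⊤:ℕ∞) F U) (hG : ContDiffOn ℝ (⊤:ℕ∞) G U)
    (hp : p ∈ U) : d2 (fun q => F q * G q) p = d2 F p * G p + F p * d2 G p :=
  ((hasD2' hU hF hp).mul (hasD2' hU hG hp)).deriv

lemma d1_mul (hU : IsOpen U) (hF : ContDiffOn ℝ (⊤:ℕ∞) F U) (hG : ContDiffOn ℝ (⊤:ℕ∞) G U)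
    (hp : p ∈ U) : d1 (fun q => F q * G q) p = d1 F p * G p + F p * d1 G p :=
  ((hasD1' hU hF hp).mul (hasD1' hU hG hp)).deriv

lemma d2_add (hU : IsOpen U) (hF : ContDiffOn ℝ (⊤:ℕ∞) F U) (hG : ContDiffOn ℝ (⊤:ℕ∞) G U)
    (hp : p ∈ U) : d2 (fun q => F q + G q) p = d2 F p + d2 G p :=
  ((hasD2' hU hF hp).add (hasD2' hU hG hp)).deriv

lemma d1_add (hU : IsOpen U) (hF : ContDiffOn ℝ (⊤:ℕ∞) F U) (hG : ContDiffOn ℝ (⊤:ℕ∞) G U)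
    (hp : p ∈ U) : d1 (fun q => F q + G q) p = d1 F p + d1 G p :=
  ((hasD1' hU hF hp).add (hasD1' hU hG hp)).deriv

lemma d2_sub (hU : IsOpen U) (hF : ContDiffOn ℝ (⊤:ℕ∞) F U) (hG : ContDiffOn ℝ (⊤:ℕ∞) G U)
    (hp : p ∈ U) : d2 (fun q => F q - G q) p = d2 F p - d2 G p :=
  ((hasD2' hU hF hp).sub (hasD2' hU hG hp)).deriv

lemma d1_sub (hU : IsOpen U) (hF : ContDiffOn ℝ (⊤:ℕ∞) F U) (hG : ContDiffOn ℝ (⊤:ℕ∞) G U)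
    (hp : p ∈ U) : d1 (fun q => F q - G q) p = d1 F p - d1 G p :=
  ((hasD1' hU hF hp).sub (hasD1' hU hG hp)).deriv

lemma d2_inv (hU : IsOpen U) (hF : ContDiffOn ℝ (⊤:ℕ∞) F U) (hp : p ∈ U) (hne : F p ≠ 0) :
    d2 (fun q => (F q)⁻¹) p = -(d2 F p) / (F p) ^ 2 :=
  ((hasD2' hU hF hp).inv hne).deriv

lemma d1_inv (hU : IsOpen U) (hF : ContDiffOn ℝ (⊤:ℕ∞) F U) (hp : p ∈ U) (hne : F p ≠ 0) :
    d1 (fun q => (F q)⁻¹) p = -(d1 F p) / (F p) ^ 2 :=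
  ((hasD1' hU hF hp).inv hne).deriv

lemma d2_div (hU : IsOpen U) (hF : ContDiffOn ℝ (⊤:ℕ∞) F U) (hG : ContDiffOn ℝ (⊤:ℕ∞) G U)
    (hp : p ∈ U) (hne : G p ≠ 0) :
    d2 (fun q => F q / G q) p = (d2 F p * G p - F p * d2 G p) / (G p) ^ 2 :=
  ((hasD2' hU hF hp).div (hasD2' hU hG hp) hne).deriv

lemma d1_div (hU : IsOpen U) (hF : ContDiffOn ℝ (⊤:ℕ∞) F U) (hG : ContDiffOn ℝ (⊤:ℕ∞) G U)
    (hp : p ∈ U) (hne : G p ≠ 0) :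
    d1 (fun q => F q / G q) p = (d1 F p * G p - F p * d1 G p) / (G p) ^ 2 :=
  ((hasD1' hU hF hp).div (hasD1' hU hG hp) hne).deriv

lemma d2_sum (hU : IsOpen U) {F : Fin n → ℝ × ℝ → ℝ}
    (hF : ∀ k, ContDiffOn ℝ (⊤:ℕ∞) (F k) U) (hp : p ∈ U) :
    d2 (fun q => ∑ k : Fin n, F k q) p = ∑ k : Fin n, d2 (F k) p :=
  (HasDerivAt.fun_sum fun k _ => hasD2' hU (hF k) hp).deriv

lemma d1_sum (hU : IsOpen U) {F : Fin n → ℝ × ℝ → ℝ}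
    (hF : ∀ k, ContDiffOn ℝ (⊤:ℕ∞) (F k) U) (hp : p ∈ U) :
    d1 (fun q => ∑ k : Fin n, F k q) p = ∑ k : Fin n, d1 (F k) p :=
  (HasDerivAt.fun_sum fun k _ => hasD1' hU (hF k) hp).deriv

lemma d2_fst : d2 (fun q : ℝ × ℝ => q.1) p = 0 := by simp [d2]
lemma d1_fst : d1 (fun q : ℝ × ℝ => q.1) p = 1 := by simp [d1]
lemma d2_snd : d2 (fun q : ℝ × ℝ => q.2) p = 1 := by simp [d2]
lemma d1_snd : d1 (fun q : ℝ × ℝ => q.2) p = 0 := by simp [d1]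
end Arith


noncomputable def DD (w F : ℝ × ℝ → ℝ) (q : ℝ × ℝ) : ℝ := d1 F q + d2 (d2 w) q * d2 F q

section DDlem
variable {F G : ℝ × ℝ → ℝ} {U : Set (ℝ × ℝ)} {q : ℝ × ℝ} {w : ℝ × ℝ → ℝ} {n : ℕ}

lemma DD_congr (hU : IsOpen U) (hFG : ∀ r ∈ U, F r = G r) (hq : q ∈ U) :
    DD w F q = DD w G q := by
  unfold DD; rw [d1_congr hU hFG hq, d2_congr hU hFG hq]

lemma DD_mul (hU : IsOpen U) (hF : ContDiffOn ℝ (⊤:ℕ∞) F U) (hG : ContDiffOn ℝ (⊤:ℕ∞) G U)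
    (hq : q ∈ U) : DD w (fun r => F r * G r) q = DD w F q * G q + F q * DD w G q := by
  unfold DD; rw [d1_mul hU hF hG hq, d2_mul hU hF hG hq]; ring

lemma DD_add (hU : IsOpen U) (hF : ContDiffOn ℝ (⊤:ℕ∞) F U) (hG : ContDiffOn ℝ (⊤:ℕ∞) G U)
    (hq : q ∈ U) : DD w (fun r => F r + G r) q = DD w F q + DD w G q := by
  unfold DD; rw [d1_add hU hF hG hq, d2_add hU hF hG hq]; ring

lemma DD_sub (hU : IsOpen U) (hF : ContDiffOn ℝ (⊤:ℕ∞) F U) (hG : ContDiffOn ℝ (⊤:ℕ∞) G U)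
    (hq : q ∈ U) : DD w (fun r => F r - G r) q = DD w F q - DD w G q := by
  unfold DD; rw [d1_sub hU hF hG hq, d2_sub hU hF hG hq]; ring

lemma DD_inv (hU : IsOpen U) (hF : ContDiffOn ℝ (⊤:ℕ∞) F U) (hq : q ∈ U) (hne : F q ≠ 0) :
    DD w (fun r => (F r)⁻¹) q = -(DD w F q) / (F q) ^ 2 := by
  unfold DD; rw [d1_inv hU hF hq hne, d2_inv hU hF hq hne]; ring

lemma DD_sum (hU : IsOpen U) {F : Fin n → ℝ × ℝ → ℝ}
    (hF : ∀ k, ContDiffOn ℝ (⊤:ℕ∞) (F k) U) (hq : q ∈ U) :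
    DD w (fun r => ∑ k : Fin n, F k r) q = ∑ k : Fin n, DD w (F k) q := by
  unfold DD; rw [d1_sum hU hF hq, d2_sum hU hF hq, Finset.mul_sum, ← Finset.sum_add_distrib]

end DDlem

/-- Bundled context for the main argument. -/
structure Ctx (w : ℝ × ℝ → ℝ) (U : Set (ℝ × ℝ)) : Prop where
  hU : IsOpen U
  hw : ContDiffOn ℝ (⊤:ℕ∞) w U
  hburg : ∀ q ∈ U, d1 (d2 (d2 w)) q + d2 (d2 w) q * d2 (d2 (d2 w)) q = 0
  h0 : ∀ q ∈ U, d2 (d2 w) q ≠ 0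
  h10 : ∀ q ∈ U, d1 (d2 (d2 w)) q ≠ 0

namespace Ctx
variable {w : ℝ × ℝ → ℝ} {U : Set (ℝ × ℝ)} {q : ℝ × ℝ}

lemma hh (C : Ctx w U) : ContDiffOn ℝ (⊤:ℕ∞) (d2 (d2 w)) U :=
  contDiffOn_d2 C.hU (contDiffOn_d2 C.hU C.hw)

lemma hh1 (C : Ctx w U) : ContDiffOn ℝ (⊤:ℕ∞) (d1 (d2 (d2 w))) U := contDiffOn_d1 C.hU C.hh

lemma hh2 (C : Ctx w U) : ContDiffOn ℝ (⊤:ℕ∞) (d2 (d2 (d2 w))) U := contDiffOn_d2 C.hU C.hh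

lemma hh22 (C : Ctx w U) : ContDiffOn ℝ (⊤:ℕ∞) (d2 (d2 (d2 (d2 w)))) U :=
  contDiffOn_d2 C.hU C.hh2

lemma burg' (C : Ctx w U) (hq : q ∈ U) :
    d1 (d2 (d2 w)) q = -(d2 (d2 w) q * d2 (d2 (d2 w)) q) := by
  have := C.hburg q hq; linarith

lemma h2ne (C : Ctx w U) (hq : q ∈ U) : d2 (d2 (d2 w)) q ≠ 0 := by
  intro h
  exact C.h10 q hq (by rw [C.burg' hq, h, mul_zero, neg_zero])

lemma htheta (C : Ctx w U) : ∀ k, ContDiffOn ℝ (⊤:ℕ∞) (thetaSeq w k) U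
  | 0 => (contDiff_snd.contDiffOn).sub ((contDiff_fst.contDiffOn).mul C.hh)
  | (k+1) => (C.hh.div C.hh1 C.h10).mul (contDiffOn_d2 C.hU (C.htheta k))

lemma d2theta (C : Ctx w U) (k : ℕ) (hq : q ∈ U) :
    d2 (thetaSeq w k) q = -(d2 (d2 (d2 w)) q) * thetaSeq w (k + 1) q := by
  have e : thetaSeq w (k+1) q
      = d2 (d2 w) q / d1 (d2 (d2 w)) q * d2 (thetaSeq w k) q := rfl
  rw [e, C.burg' hq]
  field_simp [C.h0 q hq, C.h2ne hq]

lemma DDh (C : Ctx w U) (hq : q ∈ U) : DD w (d2 (d2 w)) q = 0 := C.hburg q hq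

lemma comm (C : Ctx w U) {F : ℝ × ℝ → ℝ} (hF : ContDiffOn ℝ (⊤:ℕ∞) F U) (hq : q ∈ U) :
    DD w (d2 F) q = d2 (DD w F) q - d2 (d2 (d2 w)) q * d2 F q := by
  have hd2F : ContDiffOn ℝ (⊤:ℕ∞) (d2 F) U := contDiffOn_d2 C.hU hF
  have hd1F : ContDiffOn ℝ (⊤:ℕ∞) (d1 F) U := contDiffOn_d1 C.hU hF
  have e1 : d2 (fun r => d1 F r + d2 (d2 w) r * d2 F r) q = d2 (d1 F) q
      + (d2 (d2 (d2 w)) q * d2 F q + d2 (d2 w) q * d2 (d2 F) q) := by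
    rw [d2_add C.hU hd1F (C.hh.mul hd2F) hq, d2_mul C.hU C.hh hd2F hq]
  have e2 : d2 (d1 F) q = d1 (d2 F) q := (d1_d2_symm C.hU hF hq).symm
  unfold DD
  rw [e1, e2]; ring

lemma DDh2 (C : Ctx w U) (hq : q ∈ U) :
    DD w (d2 (d2 (d2 w))) q = -(d2 (d2 (d2 w)) q) ^ 2 := by
  have := C.comm C.hh hq
  rw [d2_zero_of_eq_zero C.hU (fun r hr => C.DDh hr) hq] at this
  rw [this]; ring

lemma DDneginv (C : Ctx w U) (hq : q ∈ U) :
    DD w (fun r => -(d2 (d2 (d2 w)) r)⁻¹) q = -1 := by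
  have hinv : DD w (fun r => (d2 (d2 (d2 w)) r)⁻¹) q = 1 := by
    rw [DD_inv C.hU C.hh2 hq (C.h2ne hq), C.DDh2 hq]
    field_simp [C.h2ne hq]
  have : DD w (fun r => -(d2 (d2 (d2 w)) r)⁻¹) q
      = DD w (fun r => (0:ℝ) - (d2 (d2 (d2 w)) r)⁻¹) q := by
    apply DD_congr C.hU (fun r _ => by ring) hq
  rw [this, DD_sub (G := fun r => (d2 (d2 (d2 w)) r)⁻¹) C.hU contDiffOn_const (C.hh2.inv (fun r hr => C.h2ne hr)) hq, hinv]
  have hz : DD w (fun _ : ℝ × ℝ => (0:ℝ)) q = 0 := by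
    unfold DD d1 d2; simp
  rw [hz]; ring

lemma theta_negrep (C : Ctx w U) (k : ℕ) (hq : q ∈ U) :
    thetaSeq w (k + 1) q = -(d2 (d2 (d2 w)) q)⁻¹ * d2 (thetaSeq w k) q := by
  have e : thetaSeq w (k+1) q
      = d2 (d2 w) q / d1 (d2 (d2 w)) q * d2 (thetaSeq w k) q := rfl
  rw [e, C.burg' hq]
  field_simp [C.h0 q hq, C.h2ne hq]

lemma DDtheta (C : Ctx w U) : ∀ k, ∀ q ∈ U, DD w (thetaSeq w k) q = 0
  | 0 => by
    intro q hq
    have hsnd : ContDiffOn ℝ (⊤:ℕ∞) (fun r : ℝ × ℝ => r.2) U := contDiff_snd.contDiffOn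
    have hfst : ContDiffOn ℝ (⊤:ℕ∞) (fun r : ℝ × ℝ => r.1) U := contDiff_fst.contDiffOn
    have e : DD w (thetaSeq w 0) q
        = DD w (fun r : ℝ × ℝ => r.2) q - DD w (fun r => r.1 * d2 (d2 w) r) q :=
      DD_sub C.hU hsnd (hfst.mul C.hh) hq
    rw [show thetaSeq w 0 = fun p : ℝ × ℝ => p.2 - p.1 * d2 (d2 w) p from rfl] at *
    rw [e, DD_mul C.hU hfst C.hh hq, C.DDh hq]
    unfold DD
    rw [d1_fst, d2_fst, d1_snd, d2_snd]
    ring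
  | (k+1) => by
    intro q hq
    have hrep : ∀ r ∈ U, thetaSeq w (k+1) r
        = -(d2 (d2 (d2 w)) r)⁻¹ * d2 (thetaSeq w k) r := fun r hr => C.theta_negrep k hr
    have hNI : ContDiffOn ℝ (⊤:ℕ∞) (fun r => -(d2 (d2 (d2 w)) r)⁻¹) U :=
      (C.hh2.inv (fun r hr => C.h2ne hr)).neg
    have hd2θ : ContDiffOn ℝ (⊤:ℕ∞) (d2 (thetaSeq w k)) U := contDiffOn_d2 C.hU (C.htheta k)
    rw [DD_congr C.hU hrep hq, DD_mul C.hU hNI hd2θ hq, C.DDneginv hq]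
    have hcomm := C.comm (C.htheta k) hq
    rw [d2_zero_of_eq_zero C.hU (C.DDtheta k) hq] at hcomm
    rw [hcomm, C.d2theta k hq]
    field_simp [C.h2ne hq]
    ring

lemma theta1_eq (C : Ctx w U) (hq : q ∈ U) :
    thetaSeq w 1 q = -(d2 (d2 (d2 w)) q)⁻¹ + q.1 := by
  have hsnd : ContDiffOn ℝ (⊤:ℕ∞) (fun r : ℝ × ℝ => r.2) U := contDiff_snd.contDiffOn
  have hfst : ContDiffOn ℝ (⊤:ℕ∞) (fun r : ℝ × ℝ => r.1) U := contDiff_fst.contDiffOn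
  have e0 : d2 (thetaSeq w 0) q = 1 - q.1 * d2 (d2 (d2 w)) q := by
    rw [show thetaSeq w 0 = fun p : ℝ × ℝ => p.2 - p.1 * d2 (d2 w) p from rfl]
    rw [d2_sub C.hU hsnd (hfst.mul C.hh) hq, d2_mul C.hU hfst C.hh hq, d2_snd, d2_fst]
    ring
  have e : thetaSeq w 1 q
      = d2 (d2 w) q / d1 (d2 (d2 w)) q * d2 (thetaSeq w 0) q := rfl
  rw [e, e0, C.burg' hq]
  field_simp [C.h0 q hq, C.h2ne hq]
  ring

lemma theta2_eq (C : Ctx w U) (hq : q ∈ U) :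
    thetaSeq w 2 q = -(d2 (d2 (d2 (d2 w))) q) / (d2 (d2 (d2 w)) q) ^ 3 := by
  have e1 : d2 (thetaSeq w 1) q
      = d2 (fun r => -(d2 (d2 (d2 w)) r)⁻¹ + r.1) q :=
    d2_congr C.hU (fun r hr => C.theta1_eq hr) hq
  have hfst : ContDiffOn ℝ (⊤:ℕ∞) (fun r : ℝ × ℝ => r.1) U := contDiff_fst.contDiffOn
  have hNI : ContDiffOn ℝ (⊤:ℕ∞) (fun r => -(d2 (d2 (d2 w)) r)⁻¹) U :=
    (C.hh2.inv (fun r hr => C.h2ne hr)).neg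
  have e2 : d2 (fun r => -(d2 (d2 (d2 w)) r)⁻¹ + r.1) q
      = d2 (fun r => -(d2 (d2 (d2 w)) r)⁻¹) q + 0 := by
    rw [d2_add C.hU hNI hfst hq, d2_fst]
  have e3 : d2 (fun r => -(d2 (d2 (d2 w)) r)⁻¹) q
      = d2 (d2 (d2 (d2 w))) q / (d2 (d2 (d2 w)) q) ^ 2 := by
    have : d2 (fun r => -(d2 (d2 (d2 w)) r)⁻¹) q
        = d2 (fun r => (0:ℝ) - (d2 (d2 (d2 w)) r)⁻¹) q :=
      d2_congr C.hU (fun r _ => by ring) hq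
    rw [this, d2_sub (G := fun r => (d2 (d2 (d2 w)) r)⁻¹) C.hU contDiffOn_const (C.hh2.inv (fun r hr => C.h2ne hr)) hq,
      d2_inv C.hU C.hh2 hq (C.h2ne hq)]
    have : d2 (fun _ : ℝ × ℝ => (0:ℝ)) q = 0 := by unfold d2; simp
    rw [this]; ring
  have e : thetaSeq w 2 q
      = d2 (d2 w) q / d1 (d2 (d2 w)) q * d2 (thetaSeq w 1) q := rfl
  rw [e, e1, e2, e3, C.burg' hq]
  field_simp [C.h0 q hq, C.h2ne hq]
  ring

end Ctx


noncomputable def Afun (w : ℝ × ℝ → ℝ) (q : ℝ × ℝ) : ℝ :=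
  d2 (d2 w) q / (d1 (d2 (d2 w)) q * thetaSeq w 2 q)

noncomputable def Bfun (w : ℝ × ℝ → ℝ) (m : ℕ) (ϱ : (Fin (m + 2) → ℝ) → ℝ) (q : ℝ × ℝ) : ℝ :=
  pdArg ϱ 0 (argvec w m q)
    - ∑ k : Fin (m + 1), thetaSeq w (k + 1) q * pdArg ϱ k.succ (argvec w m q)

namespace Ctx
variable {w : ℝ × ℝ → ℝ} {U : Set (ℝ × ℝ)} {q : ℝ × ℝ} {m : ℕ}
  {G : (Fin (m + 2) → ℝ) → ℝ}

lemma argcomp_smooth (C : Ctx w U) (m : ℕ) :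
    ∀ i : Fin (m + 2), ContDiffOn ℝ (⊤:ℕ∞) (fun q => argvec w m q i) U := by
  refine Fin.cases ?_ ?_
  · have : (fun q => argvec w m q 0) = d2 (d2 w) := by
      funext q; simp [argvec]
    rw [this]; exact C.hh
  · intro j
    have : (fun q => argvec w m q j.succ) = thetaSeq w j := by
      funext q; simp [argvec]
    rw [this]; exact C.htheta j

lemma d2_compArg (C : Ctx w U) (hG : ContDiff ℝ (⊤:ℕ∞) G) (hq : q ∈ U) :
    d2 (fun r => G (argvec w m r)) q
      = ∑ i, pdArg G i (argvec w m q) * d2 (fun r => argvec w m r i) q :=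
  d2_comp C.hU hG (fun i q => argvec w m q i) (C.argcomp_smooth m) hq

lemma d1_compArg (C : Ctx w U) (hG : ContDiff ℝ (⊤:ℕ∞) G) (hq : q ∈ U) :
    d1 (fun r => G (argvec w m r)) q
      = ∑ i, pdArg G i (argvec w m q) * d1 (fun r => argvec w m r i) q :=
  d1_comp C.hU hG (fun i q => argvec w m q i) (C.argcomp_smooth m) hq

lemma compArg_smooth (C : Ctx w U) (hG : ContDiff ℝ (⊤:ℕ∞) G) :
    ContDiffOn ℝ (⊤:ℕ∞) (fun r => G (argvec w m r)) U :=
  contDiffOn_comp hG (fun i q => argvec w m q i) (C.argcomp_smooth m)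

lemma DDargcomp (C : Ctx w U) (hq : q ∈ U) :
    ∀ i : Fin (m + 2), DD w (fun r => argvec w m r i) q = 0 := by
  refine Fin.cases ?_ ?_
  · have e : ∀ r ∈ U, argvec w m r 0 = d2 (d2 w) r := by intro r _; simp [argvec]
    rw [DD_congr C.hU e hq]; exact C.DDh hq
  · intro j
    have e : ∀ r ∈ U, argvec w m r j.succ = thetaSeq w j r := by intro r _; simp [argvec]
    rw [DD_congr C.hU e hq]; exact C.DDtheta j q hq

lemma DD_compArg (C : Ctx w U) (hG : ContDiff ℝ (⊤:ℕ∞) G) (hq : q ∈ U) :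
    DD w (fun r => G (argvec w m r)) q = 0 := by
  have e : DD w (fun r => G (argvec w m r)) q
      = ∑ i, pdArg G i (argvec w m q) * d1 (fun r => argvec w m r i) q
        + d2 (d2 w) q * ∑ i, pdArg G i (argvec w m q) * d2 (fun r => argvec w m r i) q := by
    unfold DD; rw [C.d2_compArg hG hq, C.d1_compArg hG hq]
  rw [e, Finset.mul_sum, ← Finset.sum_add_distrib]
  apply Finset.sum_eq_zero
  intro i _
  have hci := C.DDargcomp hq i
  unfold DD at hci
  linear_combination pdArg G i (argvec w m q) * hci

lemma d2argcomp0 (C : Ctx w U) (hq : q ∈ U) :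
    d2 (fun r => argvec w m r (0 : Fin (m + 2))) q = d2 (d2 (d2 w)) q :=
  d2_congr C.hU (fun r _ => by simp [argvec]) hq

lemma d2argcompS (C : Ctx w U) (hq : q ∈ U) (j : Fin (m + 1)) :
    d2 (fun r => argvec w m r j.succ) q
      = -(d2 (d2 (d2 w)) q) * thetaSeq w (j + 1) q := by
  have : d2 (fun r => argvec w m r j.succ) q = d2 (thetaSeq w j) q :=
    d2_congr C.hU (fun r _ => by simp [argvec]) hq
  rw [this, C.d2theta j hq]

end Ctx

section MainKey
variable {w : ℝ × ℝ → ℝ} {U : Set (ℝ × ℝ)} {m : ℕ} {ϱ : (Fin (m + 2) → ℝ) → ℝ}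

lemma mainkey (C : Ctx w U) (hθ2 : ∀ q ∈ U, thetaSeq w 2 q ≠ 0)
    (hϱ : ContDiff ℝ (⊤:ℕ∞) ϱ) :
    ∀ q ∈ U, DD w (d2 (fun r => Afun w r * Bfun w m ϱ r + ϱ (argvec w m r))) q = 0 := by
  have hU := C.hU
  have hpd : ∀ i : Fin (m + 2), ContDiff ℝ (⊤:ℕ∞) (pdArg ϱ i) := contDiff_pdArg hϱ
  have hcompSm : ∀ i : Fin (m + 2),
      ContDiffOn ℝ (⊤:ℕ∞) (fun r => pdArg ϱ i (argvec w m r)) U :=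
    fun i => C.compArg_smooth (hpd i)
  have hA : ContDiffOn ℝ (⊤:ℕ∞) (Afun w) U :=
    C.hh.div (C.hh1.mul (C.htheta 2)) (fun r hr => mul_ne_zero (C.h10 r hr) (hθ2 r hr))
  have hB : ContDiffOn ℝ (⊤:ℕ∞) (Bfun w m ϱ) U :=
    (hcompSm 0).sub (ContDiffOn.sum fun k _ => (C.htheta (k + 1)).mul (hcompSm k.succ))
  have hAB : ContDiffOn ℝ (⊤:ℕ∞) (fun r => Afun w r * Bfun w m ϱ r) U := hA.mul hB
  have hrc : ContDiffOn ℝ (⊤:ℕ∞) (fun r => ϱ (argvec w m r)) U := C.compArg_smooth hϱ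
  have hf : ContDiffOn ℝ (⊤:ℕ∞)
      (fun r => Afun w r * Bfun w m ϱ r + ϱ (argvec w m r)) U := hAB.add hrc
  -- DD of B vanishes
  have hDDB : ∀ r ∈ U, DD w (Bfun w m ϱ) r = 0 := by
    intro r hr
    have e : DD w (Bfun w m ϱ) r
        = DD w (fun s => pdArg ϱ 0 (argvec w m s)) r
          - DD w (fun s => ∑ k : Fin (m + 1),
              thetaSeq w (k + 1) s * pdArg ϱ k.succ (argvec w m s)) r :=
      DD_sub hU (hcompSm 0)
        (ContDiffOn.sum fun k _ => (C.htheta (k + 1)).mul (hcompSm k.succ)) hr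
    rw [e, C.DD_compArg (hpd 0) hr,
      DD_sum hU (fun k => (C.htheta (k + 1)).mul (hcompSm k.succ)) hr]
    have : ∀ k : Fin (m + 1), k ∈ Finset.univ →
        DD w (fun s => thetaSeq w (k + 1) s * pdArg ϱ k.succ (argvec w m s)) r = 0 := by
      intro k _
      rw [DD_mul hU (C.htheta (k + 1)) (hcompSm k.succ) hr,
        C.DDtheta (k + 1) r hr, C.DD_compArg (hpd k.succ) hr]
      ring
    rw [Finset.sum_congr rfl this]
    simp
  -- DD of A
  have hDDA : ∀ r ∈ U, DD w (Afun w) r = -(thetaSeq w 2 r)⁻¹ := by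
    intro r hr
    have erep : ∀ s ∈ U, Afun w s
        = -(d2 (d2 (d2 w)) s)⁻¹ * (thetaSeq w 2 s)⁻¹ := by
      intro s hs
      unfold Afun
      rw [C.burg' hs]
      field_simp [C.h0 s hs, C.h2ne hs, hθ2 s hs]
    have hNI : ContDiffOn ℝ (⊤:ℕ∞) (fun s => -(d2 (d2 (d2 w)) s)⁻¹) U :=
      (C.hh2.inv (fun s hs => C.h2ne hs)).neg
    have hTI : ContDiffOn ℝ (⊤:ℕ∞) (fun s => (thetaSeq w 2 s)⁻¹) U :=
      (C.htheta 2).inv hθ2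
    rw [DD_congr hU erep hr, DD_mul hU hNI hTI hr, C.DDneginv hr,
      DD_inv hU (C.htheta 2) hr (hθ2 r hr), C.DDtheta 2 r hr]
    field_simp [hθ2 r hr]
    simp
  -- DD of f
  have hDDf : ∀ r ∈ U, DD w (fun s => Afun w s * Bfun w m ϱ s + ϱ (argvec w m s)) r
      = -(Bfun w m ϱ r) * (thetaSeq w 2 r)⁻¹ := by
    intro r hr
    rw [DD_add hU hAB hrc hr, DD_mul hU hA hB hr, hDDA r hr, hDDB r hr,
      C.DD_compArg hϱ hr]
    ring
  -- now the main computation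
  intro q hq
  rw [C.comm hf hq]
  have e1 : d2 (DD w (fun s => Afun w s * Bfun w m ϱ s + ϱ (argvec w m s))) q
      = d2 (fun r => -(Bfun w m ϱ r) * (thetaSeq w 2 r)⁻¹) q := d2_congr hU hDDf hq
  have e2 : d2 (fun r => -(Bfun w m ϱ r) * (thetaSeq w 2 r)⁻¹) q
      = d2 (fun r => d2 (d2 (d2 w)) r * (Afun w r * Bfun w m ϱ r)) q := by
    apply d2_congr hU ?_ hq
    intro s hs
    unfold Afun
    rw [C.burg' hs]
    field_simp [C.h0 s hs, C.h2ne hs, hθ2 s hs]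
  have e3 : d2 (fun r => d2 (d2 (d2 w)) r * (Afun w r * Bfun w m ϱ r)) q
      = d2 (d2 (d2 (d2 w))) q * (Afun w q * Bfun w m ϱ q)
        + d2 (d2 (d2 w)) q * d2 (fun r => Afun w r * Bfun w m ϱ r) q :=
    d2_mul hU C.hh2 hAB hq
  have e4 : d2 (fun s => Afun w s * Bfun w m ϱ s + ϱ (argvec w m s)) q
      = d2 (fun r => Afun w r * Bfun w m ϱ r) q + d2 (fun r => ϱ (argvec w m r)) q :=
    d2_add hU hAB hrc hq
  have e5 : d2 (fun r => ϱ (argvec w m r)) q = d2 (d2 (d2 w)) q * Bfun w m ϱ q := by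
    rw [C.d2_compArg hϱ hq, Fin.sum_univ_succ, C.d2argcomp0 hq]
    have : ∀ j : Fin (m + 1), j ∈ Finset.univ →
        pdArg ϱ j.succ (argvec w m q) * d2 (fun r => argvec w m r j.succ) q
          = -(d2 (d2 (d2 w)) q * (thetaSeq w (j + 1) q * pdArg ϱ j.succ (argvec w m q))) := by
      intro j _
      rw [C.d2argcompS hq j]
      ring
    rw [Finset.sum_congr rfl this, Finset.sum_neg_distrib, ← Finset.mul_sum]
    unfold Bfun
    ring
  -- the scalar identity h₂₂ ⬝ A = h₂²
  have hθval := C.theta2_eq hq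
  have h22ne : d2 (d2 (d2 (d2 w))) q ≠ 0 := by
    intro h
    apply hθ2 q hq
    rw [hθval, h]
    simp
  have hAval : Afun w q = (d2 (d2 (d2 w)) q) ^ 2 / d2 (d2 (d2 (d2 w))) q := by
    unfold Afun
    rw [C.burg' hq, hθval]
    field_simp [C.h0 q hq, C.h2ne hq]
  rw [e1, e2, e3, e4, e5, hAval]
  field_simp [h22ne]
  ring
end MainKey


/-- The family of generalized-symmetry characteristics of the reduced
equation parameterized by an arbitrary smooth function `ϱ̂` of `∂₂²w` and `θ⁰, …, θ^m`. -/
theorem statement10 (U : Set (ℝ × ℝ)) (hU : IsOpen U) (w : ℝ × ℝ → ℝ)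
    (hred : IsRedSolOn w U)
    (h22 : ∀ p ∈ U, d2 (d2 w) p ≠ 0) (h122 : ∀ p ∈ U, d1 (d2 (d2 w)) p ≠ 0)
    (hθ2 : ∀ p ∈ U, thetaSeq w 2 p ≠ 0)
    (m : ℕ) (ϱ : (Fin (m + 2) → ℝ) → ℝ) (hϱ : ContDiff ℝ (⊤ : ℕ∞) ϱ) :
    IsGenSymCharOn w (fun p =>
      d2 (d2 w) p / (d1 (d2 (d2 w)) p * thetaSeq w 2 p) *
          (pdArg ϱ 0 (argvec w m p)
            - ∑ k : Fin (m + 1), thetaSeq w (k + 1) p * pdArg ϱ k.succ (argvec w m p))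
        + ϱ (argvec w m p)) U := by
  intro p hp
  have C : Ctx w U := ⟨hU, hred.1, hred.2, h22, h122⟩
  have key := mainkey C hθ2 hϱ
  exact d2_zero_of_eq_zero hU (fun q hq => key q hq) hp
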